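/- arXiv:2412.17233 — 3 statements merged into one kernel-verified Lean document; each statement's English description precedes it below -/
import Mathlib

section
/- For every t = (t_1,…,t_N) ∈ ℝ^N, writing [X₁(t) | X₂(t)] for the n×2n matrix formed by the first n rows of x_{i_1}(t_1)⋯x_{i_N}(t_N) split into two n×n blocks, the block X₁(t) is upper triangular with all diagonal entries equal to 1 (in particular invertible with det X₁(t) = 1), and the matrix A(t) := X₁(t)⁻¹·X₂(t) is skew-symmetric, i.e. A(t)ᵀ = −A(t). -/
noncomputable section

open Matrix

/-- `N = n(n-1)/2`, the number of parameters. -/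
def Npar (n : ℕ) : ℕ := n * (n - 1) / 2

/-- The decreasing run `a, a-1, …, b` (empty if `b > a`). -/
def decRun (a b : ℕ) : List ℕ := (List.range' b (a + 1 - b)).reverse

/-- The index sequence `(i_1, …, i_N)`: for `m = 1, …, ⌊n/2⌋` (here `m` is 0-based, so
`m+1` is the 1-based block index), concatenate `n`, the run `n-2, …, 2(m+1)-1`, and the
run `n-1, …, 2(m+1)`. -/
def wordD (n : ℕ) : List ℕ :=
  ((List.range (n / 2)).map (fun m =>
    n :: (decRun (n - 2) (2 * m + 1) ++ decRun (n - 1) (2 * m + 2)))).flatten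

/-- The matrix `x_i(t)` (index `i` is 1-based, matrix positions are 1-based in the paper,
0-based here). -/
def xMat (n : ℕ) (i : ℕ) (t : ℝ) : Matrix (Fin (2 * n)) (Fin (2 * n)) ℝ :=
  Matrix.of fun p q =>
    (if (p : ℕ) = (q : ℕ) then 1 else 0) +
    (if i < n then
        (if (p : ℕ) + 1 = i ∧ (q : ℕ) + 1 = i + 1 then t else 0)
      + (if (p : ℕ) + 1 = n + i + 1 ∧ (q : ℕ) + 1 = n + i then -t else 0)
     else
        (if (p : ℕ) + 1 = n - 1 ∧ (q : ℕ) + 1 = 2 * n then t else 0)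
      + (if (p : ℕ) + 1 = n ∧ (q : ℕ) + 1 = 2 * n - 1 then -t else 0))

/-- The product `x_{i_1}(t_1) ⋯ x_{i_N}(t_N)`; the parameter `t l` plays the role of
`t_{l+1}`. -/
def prodX (n : ℕ) (t : ℕ → ℝ) : Matrix (Fin (2 * n)) (Fin (2 * n)) ℝ :=
  ((List.range (Npar n)).map (fun l => xMat n ((wordD n).getD l 0) (t l))).prod

/-- The first block `X₁(t)` of the first `n` rows of the product. -/
def X1 (n : ℕ) (t : ℕ → ℝ) : Matrix (Fin n) (Fin n) ℝ :=
  Matrix.of fun p q =>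
    prodX n t ⟨(p : ℕ), by have := p.isLt; omega⟩ ⟨(q : ℕ), by have := q.isLt; omega⟩

/-- The second block `X₂(t)` of the first `n` rows of the product. -/
def X2 (n : ℕ) (t : ℕ → ℝ) : Matrix (Fin n) (Fin n) ℝ :=
  Matrix.of fun p q =>
    prodX n t ⟨(p : ℕ), by have := p.isLt; omega⟩ ⟨n + (q : ℕ), by have := q.isLt; omega⟩

/-- The skew-symmetric matrix `A(t) = X₁(t)⁻¹ · X₂(t)`. -/
def Amat (n : ℕ) (t : ℕ → ℝ) : Matrix (Fin n) (Fin n) ℝ := (X1 n t)⁻¹ * X2 n t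

/-- The set `S_n^{>0}` of totally positive skew-symmetric matrices. -/
def Spos (n : ℕ) : Set (Matrix (Fin n) (Fin n) ℝ) :=
  { A | ∃ t : ℕ → ℝ, (∀ i < Npar n, 0 < t i) ∧ A = Amat n t }

/-- The signed minor `M_{j,k}(A)`: `(-1)^{jk}` times the determinant of the submatrix of `A`
with (1-based) rows `{1,…,n-k-1} ∪ {n-k+j,…,n}` and columns `{1,…,n-j}`. -/
def Mminor (n j k : ℕ) (A : Matrix (Fin n) (Fin n) ℝ) : ℝ :=
  (-1 : ℝ) ^ (j * k) *
    Matrix.det (Matrix.of fun (p q : Fin (n - j)) =>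
      A (if (p : ℕ) < n - k - 1
          then ⟨(p : ℕ), by have := p.isLt; omega⟩
          else ⟨(p : ℕ) + j, by have := p.isLt; omega⟩)
        ⟨(q : ℕ), by have := q.isLt; omega⟩)

/-- The Pfaffian of an `m × m` matrix (intended for `m` even):
`Pf(B) = (1/(2^{m/2} (m/2)!)) Σ_σ sgn(σ) Π_i B_{σ(2i-1), σ(2i)}`. -/
def Pfaff {m : ℕ} (B : Matrix (Fin m) (Fin m) ℝ) : ℝ :=
  (1 / ((2 : ℝ) ^ (m / 2) * (Nat.factorial (m / 2) : ℝ))) *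
    ∑ σ : Equiv.Perm (Fin m), ((Equiv.Perm.sign σ : ℤ) : ℝ) *
      ∏ i : Fin (m / 2),
        B (σ ⟨2 * (i : ℕ), by have := i.isLt; omega⟩)
          (σ ⟨2 * (i : ℕ) + 1, by have := i.isLt; omega⟩)

/-- `Pf_I(A)`: the Pfaffian of the submatrix of `A` with rows and columns indexed by `I`
in increasing order. -/
def PfI {n : ℕ} (A : Matrix (Fin n) (Fin n) ℝ) (I : Finset (Fin n)) : ℝ :=
  Pfaff (Matrix.of fun (p q : Fin I.card) =>
    A ((I.orderIsoOfFin rfl p : Fin n)) ((I.orderIsoOfFin rfl q : Fin n)))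

/-- `sgn(I,[n]) = (-1)^{(Σ_{i∈I} i) - |I|(|I|+1)/2}` (the elements of `I` are 1-based, so a
0-based element `i` contributes `i+1`; the natural subtraction agrees with the integer one
since the sum of `|I|` distinct positive integers is at least `|I|(|I|+1)/2`). -/
def sgnSet {n : ℕ} (I : Finset (Fin n)) : ℝ :=
  (-1 : ℝ) ^ ((∑ i ∈ I, ((i : ℕ) + 1)) - I.card * (I.card + 1) / 2)

/-- The block matrix `[Id_n | A]`. -/
def IdA {n : ℕ} (A : Matrix (Fin n) (Fin n) ℝ) : Matrix (Fin n) (Fin (2 * n)) ℝ :=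
  Matrix.of fun p q =>
    if h : (q : ℕ) < n then (if (p : ℕ) = (q : ℕ) then 1 else 0)
    else A p ⟨(q : ℕ) - n, by have := q.isLt; omega⟩

/-- The full word `(j_1, …, j_{2N})`: `1, 2,1, 3,2,1, …, n-1,…,1` followed by `(i_1,…,i_N)`. -/
def wordFull (n : ℕ) : List ℕ :=
  (((List.range n).map (fun r => decRun r 1)).flatten) ++ wordD n

/-- `z(ε) = x_{j_1}(ε) ⋯ x_{j_{2N}}(ε)`. -/
def zeps (n : ℕ) (ε : ℝ) : Matrix (Fin (2 * n)) (Fin (2 * n)) ℝ :=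
  ((wordFull n).map (fun i => xMat n i ε)).prod

/-- `Z(ε) = z(ε)ᵀ · z(ε)`. -/
def Zeps (n : ℕ) (ε : ℝ) : Matrix (Fin (2 * n)) (Fin (2 * n)) ℝ :=
  (zeps n ε)ᵀ * zeps n ε

/-- First block `Y₁(ε)` of `[Id_n | A] · Z(ε)`. -/
def Y1 {n : ℕ} (A : Matrix (Fin n) (Fin n) ℝ) (ε : ℝ) : Matrix (Fin n) (Fin n) ℝ :=
  Matrix.of fun p q => (IdA A * Zeps n ε) p ⟨(q : ℕ), by have := q.isLt; omega⟩

/-- Second block `Y₂(ε)` of `[Id_n | A] · Z(ε)`. -/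
def Y2 {n : ℕ} (A : Matrix (Fin n) (Fin n) ℝ) (ε : ℝ) : Matrix (Fin n) (Fin n) ℝ :=
  Matrix.of fun p q => (IdA A * Zeps n ε) p ⟨n + (q : ℕ), by have := q.isLt; omega⟩

/-- The simple generators `s_i` of the Weyl group `W` of `SO(2n)`, as permutations of
`{1,…,2n}` (0-based here): for `1 ≤ i ≤ n-1`, `s_i = (i,i+1)(n+i,n+i+1)`; for `i = n`,
`s_n = (n,2n-1)(n-1,2n)`. -/
def sGen (n : ℕ) (i : ℕ) : Equiv.Perm (Fin (2 * n)) :=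
  if h : 1 ≤ i ∧ i ≤ n - 1 ∧ 2 ≤ n then
    Equiv.swap ⟨i - 1, by omega⟩ ⟨i, by omega⟩ *
      Equiv.swap ⟨n + i - 1, by omega⟩ ⟨n + i, by omega⟩
  else if h2 : i = n ∧ 2 ≤ n then
    Equiv.swap ⟨n - 1, by omega⟩ ⟨2 * n - 2, by omega⟩ *
      Equiv.swap ⟨n - 2, by omega⟩ ⟨2 * n - 1, by omega⟩
  else 1

/-- Membership in the Weyl group `W`: `σ(n+i) ≡ n + σ(i) (mod 2n)` for all `1 ≤ i ≤ n`,
and the number of `i ∈ {1,…,n}` with `σ(i) > n` is even. (All positions are 0-based; a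
0-based value `v` corresponds to the 1-based value `v+1`.) -/
def inW (n : ℕ) (σ : Equiv.Perm (Fin (2 * n))) : Prop :=
  (∀ i : Fin n,
    ((σ ⟨n + (i : ℕ), by have := i.isLt; omega⟩ : Fin (2 * n)) : ℕ)
      ≡ n + ((σ ⟨(i : ℕ), by have := i.isLt; omega⟩ : Fin (2 * n)) : ℕ) [MOD 2 * n]) ∧
  Even (Finset.univ.filter (fun i : Fin n =>
    n ≤ ((σ ⟨(i : ℕ), by have := i.isLt; omega⟩ : Fin (2 * n)) : ℕ))).card

/-- `I_w = {i ∈ {1,…,n} : w(i) > n}`, as a finset of `Fin n` (0-based). -/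
def Iset (n : ℕ) (σ : Equiv.Perm (Fin (2 * n))) : Finset (Fin n) :=
  Finset.univ.filter (fun i : Fin n =>
    n ≤ ((σ ⟨(i : ℕ), by have := i.isLt; omega⟩ : Fin (2 * n)) : ℕ))

/-- The parabolic subgroup `W_{[n-1]}` generated by `s_1, …, s_{n-1}`. -/
def Wpar (n : ℕ) : Subgroup (Equiv.Perm (Fin (2 * n))) :=
  Subgroup.closure { σ | ∃ i, 1 ≤ i ∧ i ≤ n - 1 ∧ σ = sGen n i }

/-- The standard basis vector `e_i` of `ℝ^{2n}` (with `i : Fin n` 0-based, sitting in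
position `i` of the first block). -/
def evec (n : ℕ) (i : Fin n) : Fin (2 * n) → ℝ :=
  Pi.single ⟨(i : ℕ), by have := i.isLt; omega⟩ 1

/-- The standard basis vector `f_j` of `ℝ^{2n}` (position `n + j`). -/
def fvec (n : ℕ) (j : Fin n) : Fin (2 * n) → ℝ :=
  Pi.single ⟨n + (j : ℕ), by have := j.isLt; omega⟩ 1

/-- `f = ι(f_1)⋯ι(f_n)` in the Clifford algebra. -/
def fElt {n : ℕ} (Q : QuadraticForm ℝ (Fin (2 * n) → ℝ)) : CliffordAlgebra Q :=
  (List.ofFn (fun j : Fin n => CliffordAlgebra.ι Q (fvec n j))).prod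

/-- `e_S = ι(e_{l_1})⋯ι(e_{l_s})` where `l_1 < ⋯ < l_s` enumerates `S`. -/
def eProd {n : ℕ} (Q : QuadraticForm ℝ (Fin (2 * n) → ℝ)) (S : Finset (Fin n)) :
    CliffordAlgebra Q :=
  ((S.sort (· ≤ ·)).map (fun l => CliffordAlgebra.ι Q (evec n l))).prod

/-- `h = Π_{i=1}^n ι(e_i + Σ_j A_{ij} f_j)` (product in increasing order of `i`). -/
def hElt {n : ℕ} (Q : QuadraticForm ℝ (Fin (2 * n) → ℝ)) (A : Matrix (Fin n) (Fin n) ℝ) :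
    CliffordAlgebra Q :=
  (List.ofFn (fun i : Fin n =>
    CliffordAlgebra.ι Q (evec n i + ∑ j : Fin n, A i j • fvec n j))).prod

/-- The sorted list of the (1-based) elements of `S ⊆ {1,…,n}`. -/
def valsOf {n : ℕ} (S : Finset (Fin n)) : List ℕ :=
  (S.sort (· ≤ ·)).map (fun i => (i : ℕ) + 1)

/-- The word `w_1 w_2 ⋯ w_r` where
`w_m = s_n (s_{n-2}⋯s_{i_{2m-1}}) (s_{n-1}⋯s_{i_{2m}})` and `vals` lists `i_1 < i_2 < ⋯`
(1-based); `m` is 0-based here. -/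
def uWord (n r : ℕ) (vals : List ℕ) : List ℕ :=
  ((List.range r).map (fun m =>
    n :: (decRun (n - 2) (vals.getD (2 * m) 0) ++ decRun (n - 1) (vals.getD (2 * m + 1) 0)))).flatten

/-- The permutation `u = w_1 w_2 ⋯ w_r`. -/
def uPerm (n r : ℕ) (vals : List ℕ) : Equiv.Perm (Fin (2 * n)) :=
  ((uWord n r vals).map (sGen n)).prod

/-- `L = r + Σ_{m=1}^{r} ((n-1-i_{2m-1}) + (n-i_{2m}))`. -/
def Lval (n r : ℕ) (vals : List ℕ) : ℕ :=
  r + ∑ m ∈ Finset.range r, ((n - 1 - vals.getD (2 * m) 0) + (n - vals.getD (2 * m + 1) 0))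

namespace St14Aux

variable {n : ℕ}

/-- The duality `k ↔ k ± n` on indices. -/
def dual (n : ℕ) (k : Fin (2 * n)) : Fin (2 * n) :=
  if h : (k : ℕ) < n then ⟨(k : ℕ) + n, by have := k.isLt; omega⟩
  else ⟨(k : ℕ) - n, by have := k.isLt; omega⟩

lemma dual_val (k : Fin (2 * n)) :
    ((dual n k : Fin (2 * n)) : ℕ) = if (k : ℕ) < n then (k : ℕ) + n else (k : ℕ) - n := by
  unfold dual; split <;> simp_all

lemma dual_dual (k : Fin (2 * n)) : dual n (dual n k) = k := by
  have hk := k.isLt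
  apply Fin.ext
  rw [dual_val, dual_val]
  split_ifs <;> omega

lemma dual_ne (k : Fin (2 * n)) : dual n k ≠ k := by
  have hk := k.isLt
  intro h
  have h' := congrArg Fin.val h
  rw [dual_val] at h'
  split_ifs at h' <;> omega

lemma dual_inj {k l : Fin (2 * n)} (h : dual n k = dual n l) : k = l := by
  have := congrArg (dual n) h
  rwa [dual_dual, dual_dual] at this

/-- The matrix of the split symmetric bilinear form. -/
def Jmat (n : ℕ) : Matrix (Fin (2 * n)) (Fin (2 * n)) ℝ :=
  Matrix.of fun p q => if dual n p = q then 1 else 0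

lemma dual_eq_iff {p q : Fin (2 * n)} : dual n p = q ↔ dual n q = p := by
  constructor <;> (rintro rfl; exact dual_dual _)

lemma Jmat_transpose : (Jmat n)ᵀ = Jmat n := by
  ext p q
  show Jmat n q p = Jmat n p q
  simp only [Jmat, Matrix.of_apply]
  by_cases h : dual n q = p
  · rw [if_pos h, if_pos (dual_eq_iff.mpr h)]
  · rw [if_neg h, if_neg (fun h' => h (dual_eq_iff.mp h'))]

lemma E_mul_J (a b : Fin (2 * n)) :
    Matrix.single a b (1 : ℝ) * Jmat n = Matrix.single a (dual n b) 1 := by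
  ext p q
  by_cases hp : p = a
  · subst hp
    rw [Matrix.single_mul_apply_same]
    simp only [Jmat, Matrix.of_apply, Matrix.single, one_mul, true_and]
  · rw [Matrix.single_mul_apply_of_ne 1 a b p q hp]
    simp only [Matrix.single, Matrix.of_apply]
    rw [if_neg (fun hc => hp hc.1.symm)]

lemma J_mul_E (a b : Fin (2 * n)) :
    Jmat n * Matrix.single a b (1 : ℝ) = Matrix.single (dual n a) b 1 := by
  ext p q
  by_cases hq : q = b
  · subst hq
    rw [Matrix.mul_single_apply_same]
    simp only [Jmat, Matrix.of_apply, Matrix.single, mul_one, and_true]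
    by_cases h : dual n p = a
    · rw [if_pos h, if_pos (by rw [← h, dual_dual])]
    · rw [if_neg h, if_neg (fun h' => h (by rw [← h', dual_dual]))]
  · rw [Matrix.mul_single_apply_of_ne 1 a b p q hq]
    simp only [Matrix.single, Matrix.of_apply]
    rw [if_neg (fun hc => hq hc.2.symm)]

lemma E_transpose (a b : Fin (2 * n)) :
    (Matrix.single a b (1 : ℝ))ᵀ = Matrix.single b a 1 := by
  ext p q
  simp only [Matrix.transpose_apply, Matrix.single, Matrix.of_apply]
  exact if_congr and_comm rfl rfl

lemma conj_J (a b : Fin (2 * n)) (hab : a ≠ b) (t : ℝ) :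
    (1 + t • Matrix.single a b (1 : ℝ) + (-t) • Matrix.single (dual n b) (dual n a) 1) *
        Jmat n *
      (1 + t • Matrix.single a b (1 : ℝ) + (-t) • Matrix.single (dual n b) (dual n a) 1)ᵀ
      = Jmat n := by
  have hcb : dual n b ≠ b := dual_ne b
  have hda : a ≠ dual n a := (dual_ne a).symm
  have hcd : dual n b ≠ dual n a := fun h => hab.symm (dual_inj h)
  have hddual : dual n (dual n a) = a := dual_dual a
  have hbdual : dual n (dual n b) = b := dual_dual b
  rw [Matrix.transpose_add, Matrix.transpose_add, Matrix.transpose_one,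
    Matrix.transpose_smul, Matrix.transpose_smul, E_transpose, E_transpose]
  have m1 : ∀ (x y : Fin (2 * n)) (c d : ℝ),
      Matrix.single x (dual n b) c * Matrix.single b y d = 0 :=
    fun x y c d => Matrix.single_mul_single_of_ne c x (dual n b) b hcb d
  have m2 : ∀ (x y : Fin (2 * n)) (c d : ℝ),
      Matrix.single x (dual n b) c * Matrix.single (dual n a) y d = 0 :=
    fun x y c d => Matrix.single_mul_single_of_ne c x (dual n b) (dual n a) hcd d
  have m3 : ∀ (x y : Fin (2 * n)) (c d : ℝ),
      Matrix.single x a c * Matrix.single b y d = 0 :=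
    fun x y c d => Matrix.single_mul_single_of_ne c x a b hab d
  have m4 : ∀ (x y : Fin (2 * n)) (c d : ℝ),
      Matrix.single x a c * Matrix.single (dual n a) y d = 0 :=
    fun x y c d => Matrix.single_mul_single_of_ne c x a (dual n a) hda d
  simp only [mul_add, add_mul, mul_one, one_mul, smul_mul_assoc, mul_smul_comm,
    E_mul_J, J_mul_E, hddual, hbdual, m1, m2, m3, m4,
    smul_zero, add_zero]
  simp only [neg_smul]
  abel

/-- The invariant property of partial products. -/
def Good (n : ℕ) (g : Matrix (Fin (2 * n)) (Fin (2 * n)) ℝ) : Prop :=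
  (∀ p q : Fin (2 * n), (q : ℕ) < n → (q : ℕ) < (p : ℕ) → g p q = 0) ∧
  (∀ p : Fin (2 * n), (p : ℕ) < n → g p p = 1) ∧
  g * Jmat n * gᵀ = Jmat n

lemma good_one : Good n 1 := by
  refine ⟨fun p q _ hqp => ?_, fun p _ => Matrix.one_apply_eq p, ?_⟩
  · exact Matrix.one_apply_ne (fun h => by simp [h] at hqp)
  · rw [Matrix.transpose_one, one_mul, mul_one]

lemma good_mul {g h : Matrix (Fin (2 * n)) (Fin (2 * n)) ℝ} (hg : Good n g) (hh : Good n h) :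
    Good n (g * h) := by
  obtain ⟨hg1, hg2, hg3⟩ := hg
  obtain ⟨hh1, hh2, hh3⟩ := hh
  refine ⟨fun p q hq hqp => ?_, fun p hp => ?_, ?_⟩
  · rw [Matrix.mul_apply]
    refine Finset.sum_eq_zero fun k _ => ?_
    rcases lt_or_ge (q : ℕ) (k : ℕ) with hk | hk
    · rw [hh1 k q hq hk, mul_zero]
    · rw [hg1 p k (by omega) (by omega), zero_mul]
  · rw [Matrix.mul_apply]
    rw [Finset.sum_eq_single p]
    · rw [hg2 p hp, hh2 p hp, one_mul]
    · intro k _ hk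
      have hk' : (k : ℕ) ≠ (p : ℕ) := fun h => hk (Fin.ext h)
      rcases lt_or_ge (k : ℕ) (p : ℕ) with h' | h'
      · rw [hg1 p k (by omega) h', zero_mul]
      · rw [hh1 k p hp (by omega), mul_zero]
    · intro hp'; exact absurd (Finset.mem_univ p) hp'
  · have : g * h * Jmat n * (g * h)ᵀ = g * (h * Jmat n * hᵀ) * gᵀ := by
      rw [Matrix.transpose_mul]
      simp only [Matrix.mul_assoc]
    rw [this, hh3, hg3]

lemma xMat_decomp (n i : ℕ) (hn : 2 ≤ n) (hi : 1 ≤ i) (t : ℝ) :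
    ∃ a b : Fin (2 * n), a ≠ b ∧
      xMat n i t =
        1 + t • Matrix.single a b (1 : ℝ) + (-t) • Matrix.single (dual n b) (dual n a) 1 := by
  by_cases h : i < n
  · refine ⟨⟨i - 1, by omega⟩, ⟨i, by omega⟩, fun he => by
      simp only [Fin.ext_iff] at he; omega, ?_⟩
    ext p q
    have hp := p.isLt; have hq := q.isLt
    simp only [xMat, Matrix.of_apply, Matrix.add_apply, Matrix.smul_apply, Matrix.one_apply,
      Matrix.single, smul_eq_mul, if_pos h, Fin.ext_iff, dual_val]
    split_ifs <;> first | ring1 | (exfalso; omega)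
  · refine ⟨⟨n - 2, by omega⟩, ⟨2 * n - 1, by omega⟩, fun he => by
      simp only [Fin.ext_iff] at he; omega, ?_⟩
    ext p q
    have hp := p.isLt; have hq := q.isLt
    simp only [xMat, Matrix.of_apply, Matrix.add_apply, Matrix.smul_apply, Matrix.one_apply,
      Matrix.single, smul_eq_mul, if_neg h, Fin.ext_iff, dual_val]
    split_ifs <;> first | ring1 | (exfalso; omega)

lemma good_xMat (hn : 2 ≤ n) {i : ℕ} (hi : 1 ≤ i) (t : ℝ) : Good n (xMat n i t) := by
  refine ⟨fun p q hq hqp => ?_, fun p hp => ?_, ?_⟩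
  · simp only [xMat, Matrix.of_apply]
    split_ifs <;> first | ring1 | (exfalso; omega)
  · simp only [xMat, Matrix.of_apply]
    split_ifs <;> first | ring1 | (exfalso; omega)
  · obtain ⟨a, b, hab, hx⟩ := xMat_decomp n i hn hi t
    rw [hx]
    exact conj_J a b hab t

lemma good_list_prod : ∀ L : List (Matrix (Fin (2 * n)) (Fin (2 * n)) ℝ),
    (∀ M ∈ L, Good n M) → Good n L.prod
  | [], _ => by simpa using good_one
  | (M :: L), h => by
    rw [List.prod_cons]
    exact good_mul (h M List.mem_cons_self)
      (good_list_prod L fun M' hM' => h M' (List.mem_cons_of_mem _ hM'))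

lemma one_le_of_mem_wordD (hn : 2 ≤ n) {i : ℕ} (hi : i ∈ wordD n) : 1 ≤ i := by
  simp only [wordD, List.mem_flatten, List.mem_map] at hi
  obtain ⟨l, ⟨m, _, rfl⟩, hil⟩ := hi
  rcases List.mem_cons.mp hil with rfl | hil'
  · omega
  · rcases List.mem_append.mp hil' with h' | h' <;>
    · simp only [decRun, List.mem_reverse] at h'
      obtain ⟨j, _, rfl⟩ := List.mem_range'.mp h'
      omega

lemma list_sum_range (f : ℕ → ℕ) : ∀ k : ℕ,
    ((List.range k).map f).sum = ∑ m ∈ Finset.range k, f m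
  | 0 => by simp
  | (k + 1) => by
    rw [List.range_succ, List.map_append, List.sum_append, Finset.sum_range_succ,
      list_sum_range f k]
    simp

lemma sum_arith : ∀ n : ℕ,
    (∑ m ∈ Finset.range (n / 2), (1 + 2 * (n - 2 * m - 2))) = Npar n
  | 0 => by simp [Npar]
  | 1 => by simp [Npar]
  | (n + 2) => by
    have ih := sum_arith n
    have h2 : (n + 2) / 2 = n / 2 + 1 := by omega
    rw [h2, Finset.sum_range_succ']
    have hc : ∀ m ∈ Finset.range (n / 2),
        (1 + 2 * ((n + 2) - 2 * (m + 1) - 2)) = 1 + 2 * (n - 2 * m - 2) := by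
      intro m _; congr 1; omega
    rw [Finset.sum_congr rfl hc, ih]
    have hx : (n + 2) * (n + 2 - 1) = n * (n - 1) + (4 * n + 2) := by
      cases n with
      | zero => rfl
      | succ m =>
        have e1 : m + 1 + 2 - 1 = m + 2 := by omega
        have e2 : m + 1 - 1 = m := by omega
        rw [e1, e2]; ring
    have hpar : Even (n * (n - 1)) := by
      rcases Nat.eq_zero_or_pos n with h | h
      · subst h; simp
      · have := Nat.even_mul_succ_self (n - 1)
        rwa [Nat.sub_add_cancel h, mul_comm] at this
    obtain ⟨k, hk⟩ := hpar
    simp only [Npar]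
    omega

lemma wordD_length (n : ℕ) : (wordD n).length = Npar n := by
  rw [wordD, List.length_flatten, List.map_map]
  have : ∀ m : ℕ, m ∈ Finset.range (n / 2) →
      (List.length ∘ fun m => n :: (decRun (n - 2) (2 * m + 1) ++ decRun (n - 1) (2 * m + 2))) m
        = 1 + 2 * (n - 2 * m - 2) := by
    intro m hm
    have hm' : m < n / 2 := Finset.mem_range.mp hm
    simp only [Function.comp_apply, List.length_cons, List.length_append, decRun,
      List.length_reverse, List.length_range']
    omega
  rw [list_sum_range, Finset.sum_congr rfl this, sum_arith]

lemma good_prodX (hn : 2 ≤ n) (t : ℕ → ℝ) : Good n (prodX n t) := by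
  apply good_list_prod
  intro M hM
  simp only [List.mem_map, List.mem_range] at hM
  obtain ⟨l, hl, rfl⟩ := hM
  refine good_xMat hn ?_ _
  apply one_le_of_mem_wordD hn
  rw [List.getD_eq_getElem _ _ (by rw [wordD_length]; exact hl)]
  exact List.getElem_mem _

lemma mul_J_apply (M : Matrix (Fin (2 * n)) (Fin (2 * n)) ℝ) (p k : Fin (2 * n)) :
    (M * Jmat n) p k = M p (dual n k) := by
  rw [Matrix.mul_apply]
  rw [Finset.sum_eq_single (dual n k)]
  · simp [Jmat, dual_dual]
  · intro l _ hl
    have : dual n l ≠ k := fun h => hl (by rw [← h, dual_dual])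
    simp [Jmat, this]
  · intro h; exact absurd (Finset.mem_univ _) h

lemma sum_split (F : Fin (2 * n) → ℝ) :
    ∑ k, F k = (∑ j : Fin n, F ⟨(j : ℕ), by have := j.isLt; omega⟩)
      + ∑ j : Fin n, F ⟨n + (j : ℕ), by have := j.isLt; omega⟩ := by
  have h2 : n + n = 2 * n := by omega
  rw [← Fintype.sum_equiv (finCongr h2) (fun k => F (finCongr h2 k)) F (fun k => rfl)]
  rw [Fin.sum_univ_add]
  congr 1 <;> exact Finset.sum_congr rfl fun j _ => by congr 1; exact Fin.ext (by simp)

lemma block_rel (hn : 2 ≤ n) (t : ℕ → ℝ) :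
    X1 n t * (X2 n t)ᵀ + X2 n t * (X1 n t)ᵀ = 0 := by
  obtain ⟨-, -, hinv⟩ := good_prodX hn t
  ext p q
  have hp := p.isLt; have hq := q.isLt
  set g := prodX n t with hg
  have hPQ : (g * Jmat n * gᵀ) ⟨(p : ℕ), by omega⟩ ⟨(q : ℕ), by omega⟩ = 0 := by
    rw [hinv]
    simp only [Jmat, Matrix.of_apply]
    rw [if_neg]
    intro h
    have := congrArg Fin.val h
    rw [dual_val] at this
    simp only [if_pos (show (p : ℕ) < n from hp)] at this
    omega
  rw [Matrix.mul_apply] at hPQ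
  simp only [mul_J_apply, Matrix.transpose_apply] at hPQ
  rw [sum_split (fun k => g ⟨(p : ℕ), by omega⟩ (dual n k) * g ⟨(q : ℕ), by omega⟩ k)] at hPQ
  have A1 : ∀ j : Fin n, dual n (⟨(j : ℕ), by have := j.isLt; omega⟩ : Fin (2 * n))
      = ⟨n + (j : ℕ), by have := j.isLt; omega⟩ := by
    intro j
    have hj := j.isLt
    apply Fin.ext
    rw [dual_val]
    show (if (j : ℕ) < n then (j : ℕ) + n else (j : ℕ) - n) = n + (j : ℕ)
    rw [if_pos hj]; omega
  have A2 : ∀ j : Fin n, dual n (⟨n + (j : ℕ), by have := j.isLt; omega⟩ : Fin (2 * n))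
      = ⟨(j : ℕ), by have := j.isLt; omega⟩ := by
    intro j
    apply Fin.ext
    rw [dual_val]
    show (if n + (j : ℕ) < n then n + (j : ℕ) + n else n + (j : ℕ) - n) = (j : ℕ)
    rw [if_neg (by omega)]; omega
  simp only [A1, A2] at hPQ
  simp only [Matrix.add_apply, Matrix.mul_apply, Matrix.transpose_apply, Matrix.zero_apply,
    X1, X2, Matrix.of_apply, ← hg]
  rw [add_comm] at hPQ
  exact hPQ

end St14Aux

/-- `X₁(t)` is upper triangular with unit diagonal (hence invertible of
determinant 1) and `A(t) = X₁(t)⁻¹ X₂(t)` is skew-symmetric. -/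
theorem X1_triangular_and_Amat_skew (n : ℕ) (hn : 2 ≤ n) (t : ℕ → ℝ) :
    (∀ p q : Fin n, q < p → X1 n t p q = 0) ∧
    (∀ p : Fin n, X1 n t p p = 1) ∧
    (X1 n t).det = 1 ∧ IsUnit (X1 n t) ∧ (Amat n t)ᵀ = -(Amat n t) := by
  obtain ⟨hlow, hdiag, -⟩ := St14Aux.good_prodX hn t
  have htri : ∀ p q : Fin n, q < p → X1 n t p q = 0 := by
    intro p q hqp
    exact hlow _ _ q.isLt hqp
  have hdg : ∀ p : Fin n, X1 n t p p = 1 := by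
    intro p
    exact hdiag _ p.isLt
  have hdet : (X1 n t).det = 1 := by
    rw [Matrix.det_of_upperTriangular (fun p q h => htri p q h)]
    exact Finset.prod_eq_one fun p _ => hdg p
  have hunitdet : IsUnit (X1 n t).det := by rw [hdet]; exact isUnit_one
  have hunitdetT : IsUnit (X1 n t)ᵀ.det := by rwa [Matrix.det_transpose]
  refine ⟨htri, hdg, hdet, (Matrix.isUnit_iff_isUnit_det _).mpr hunitdet, ?_⟩
  have hblock := St14Aux.block_rel hn t
  have hskew : X1 n t * (X2 n t)ᵀ = -(X2 n t * (X1 n t)ᵀ) :=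
    eq_neg_of_add_eq_zero_left hblock
  have key : (Amat n t)ᵀ = (X2 n t)ᵀ * ((X1 n t)ᵀ)⁻¹ := by
    rw [Amat, Matrix.transpose_mul, Matrix.transpose_nonsing_inv]
  rw [key]
  calc (X2 n t)ᵀ * ((X1 n t)ᵀ)⁻¹
      = (X1 n t)⁻¹ * (X1 n t * ((X2 n t)ᵀ * ((X1 n t)ᵀ)⁻¹)) := by
        rw [Matrix.nonsing_inv_mul_cancel_left _ _ hunitdet]
    _ = (X1 n t)⁻¹ * (X1 n t * (X2 n t)ᵀ * ((X1 n t)ᵀ)⁻¹) := by rw [Matrix.mul_assoc]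
    _ = (X1 n t)⁻¹ * (-(X2 n t * (X1 n t)ᵀ) * ((X1 n t)ᵀ)⁻¹) := by rw [hskew]
    _ = -((X1 n t)⁻¹ * (X2 n t * ((X1 n t)ᵀ * ((X1 n t)ᵀ)⁻¹))) := by
        simp only [Matrix.neg_mul, Matrix.mul_neg, Matrix.mul_assoc]
    _ = -(Amat n t) := by
        rw [Matrix.mul_nonsing_inv _ hunitdetT, Matrix.mul_one, Amat]
end
end

section
/- For all v, w ∈ W, the left cosets W_{[n−1]}·v and W_{[n−1]}·w are equal if and only if I_v = I_w. Moreover, for every subset S ⊆ {1,…,n} of even size there exists w ∈ W with I_w = S. Consequently, the map w ↦ I_w induces a bijection between the cosets W_{[n−1]}\W and the subsets of {1,…,n} of even size. -/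
noncomputable section

open Matrix

-- ===== auxiliary lemmas =====
namespace CosetAux

lemma sGen_val {n : ℕ} (hn : 2 ≤ n) {i : ℕ} (h1 : 1 ≤ i) (h2 : i ≤ n - 1) (x : Fin (2*n)) :
    ((sGen n i x : Fin (2*n)) : ℕ) =
      if (x:ℕ) = i - 1 then i else if (x:ℕ) = i then i - 1
      else if (x:ℕ) = n + i - 1 then n + i else if (x:ℕ) = n + i then n + i - 1 else x := by
  unfold sGen
  rw [dif_pos ⟨h1, h2, hn⟩]
  simp only [Equiv.Perm.mul_apply, Equiv.swap_apply_def, Fin.ext_iff, apply_ite Fin.val,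
    Fin.val_mk]
  split_ifs <;> omega

lemma sGen_mem {n : ℕ} {i : ℕ} (h1 : 1 ≤ i) (h2 : i ≤ n - 1) : sGen n i ∈ Wpar n :=
  Subgroup.subset_closure ⟨i, h1, h2, rfl⟩

/-- block structure property -/
def Pp (n : ℕ) (σ : Equiv.Perm (Fin (2*n))) : Prop :=
  (∀ x : Fin (2*n), ((σ x : ℕ) < n ↔ (x:ℕ) < n)) ∧
  (∀ a b : Fin (2*n), (a:ℕ) = n + (b:ℕ) → (b:ℕ) < n →
    ((σ a : Fin (2*n)) : ℕ) = n + ((σ b : Fin (2*n)) : ℕ))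

lemma Pp_one (n : ℕ) : Pp n 1 := by
  exact ⟨fun x => Iff.rfl, fun a b hab hb => by simpa using hab⟩

lemma Pp_mul {n : ℕ} {σ τ : Equiv.Perm (Fin (2*n))} (hσ : Pp n σ) (hτ : Pp n τ) :
    Pp n (σ * τ) := by
  refine ⟨fun x => ?_, fun a b hab hb => ?_⟩
  · simp only [Equiv.Perm.mul_apply]; rw [hσ.1, hτ.1]
  · simp only [Equiv.Perm.mul_apply]
    have hbn : ((τ b : Fin (2*n)) : ℕ) < n := (hτ.1 b).2 hb
    exact hσ.2 (τ a) (τ b) (hτ.2 a b hab hb) hbn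

lemma Pp_sGen {n : ℕ} (hn : 2 ≤ n) {i : ℕ} (h1 : 1 ≤ i) (h2 : i ≤ n - 1) :
    Pp n (sGen n i) := by
  refine ⟨fun x => ?_, fun a b hab hb => ?_⟩
  · rw [sGen_val hn h1 h2]
    have := x.isLt
    split_ifs <;> omega
  · rw [sGen_val hn h1 h2, sGen_val hn h1 h2]
    split_ifs <;> omega

/-- inner lemma : bubble value k to position k -/
lemma inner {n k : ℕ} (hn : 2 ≤ n) (hk : k < n)
    (H : ∀ σ : Equiv.Perm (Fin (2*n)), Pp n σ →
      (∀ x : Fin (2*n), k ≤ (x:ℕ) → (x:ℕ) < n → σ x = x) → σ ∈ Wpar n) :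
    ∀ d : ℕ, ∀ σ : Equiv.Perm (Fin (2*n)), Pp n σ →
      (∀ x : Fin (2*n), k + 1 ≤ (x:ℕ) → (x:ℕ) < n → σ x = x) →
      (∀ p : Fin (2*n), (σ p : ℕ) = k → k ≤ (p:ℕ) + d) → σ ∈ Wpar n := by
  intro d
  induction d with
  | zero =>
    intro σ hP hfix hd
    obtain ⟨kf, hkf⟩ : ∃ kf : Fin (2*n), (kf:ℕ) = k := ⟨⟨k, by omega⟩, rfl⟩
    obtain ⟨p, hpd⟩ : ∃ p, p = σ.symm kf := ⟨_, rfl⟩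
    have hsp : σ p = kf := by rw [hpd]; exact Equiv.apply_symm_apply σ kf
    have hspv : ((σ p : Fin (2*n)) : ℕ) = k := by rw [hsp, hkf]
    have hpn : (p:ℕ) < n := (hP.1 p).1 (by omega)
    have hge := hd p hspv
    have hple : (p:ℕ) ≤ k := by
      by_contra hgt
      have hfx := congrArg Fin.val (hfix p (by omega) hpn)
      omega
    apply H σ hP
    intro x hkx hxn
    rcases Nat.eq_or_lt_of_le hkx with heq | hlt
    · have hpx : p = x := Fin.ext (by omega)
      rw [← hpx, hsp]
      exact Fin.ext (by omega)
    · exact hfix x hlt hxn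
  | succ d ih =>
    intro σ hP hfix hd
    obtain ⟨kf, hkf⟩ : ∃ kf : Fin (2*n), (kf:ℕ) = k := ⟨⟨k, by omega⟩, rfl⟩
    obtain ⟨p, hpd⟩ : ∃ p, p = σ.symm kf := ⟨_, rfl⟩
    have hsp : σ p = kf := by rw [hpd]; exact Equiv.apply_symm_apply σ kf
    have hspv : ((σ p : Fin (2*n)) : ℕ) = k := by rw [hsp, hkf]
    have hpn : (p:ℕ) < n := (hP.1 p).1 (by omega)
    have hple : (p:ℕ) ≤ k := by
      by_contra hgt
      have hfx := congrArg Fin.val (hfix p (by omega) hpn)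
      omega
    have hge := hd p hspv
    rcases Nat.eq_or_lt_of_le hple with heq | hlt
    · apply ih σ hP hfix
      intro q hq
      have hqp : q = p := σ.injective (Fin.ext (by rw [hq, hspv]))
      have := congrArg Fin.val hqp
      omega
    · -- ↑p < k ; multiply by s := sGen n (↑p + 1)
      have hi1 : 1 ≤ (p:ℕ) + 1 := by omega
      have hi2 : (p:ℕ) + 1 ≤ n - 1 := by omega
      have hsval := sGen_val hn hi1 hi2
      have hmem : σ * sGen n ((p:ℕ)+1) ∈ Wpar n := by
        apply ih (σ * sGen n ((p:ℕ)+1)) (Pp_mul hP (Pp_sGen hn hi1 hi2))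
        · intro x hkx hxn
          have hsx : sGen n ((p:ℕ)+1) x = x := by
            apply Fin.ext; rw [hsval]; split_ifs <;> omega
          simp only [Equiv.Perm.mul_apply]
          rw [hsx]; exact hfix x hkx hxn
        · intro q hq
          simp only [Equiv.Perm.mul_apply] at hq
          have h1 : sGen n ((p:ℕ)+1) q = p := σ.injective (Fin.ext (by rw [hq, hspv]))
          have h2 := congrArg Fin.val h1
          rw [hsval] at h2
          have := q.isLt
          split_ifs at h2 <;> omega
      have hfin : σ = (σ * sGen n ((p:ℕ)+1)) * (sGen n ((p:ℕ)+1))⁻¹ := by group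
      rw [hfin]
      exact Subgroup.mul_mem _ hmem (Subgroup.inv_mem _ (sGen_mem hi1 hi2))

lemma outer {n : ℕ} (hn : 2 ≤ n) :
    ∀ k, k ≤ n → ∀ σ : Equiv.Perm (Fin (2*n)), Pp n σ →
      (∀ x : Fin (2*n), k ≤ (x:ℕ) → (x:ℕ) < n → σ x = x) → σ ∈ Wpar n := by
  intro k
  induction k with
  | zero =>
    intro _ σ hP hfix
    have : σ = 1 := by
      apply Equiv.ext
      intro x
      simp only [Equiv.Perm.one_apply]
      by_cases hx : (x:ℕ) < n
      · exact hfix x (by omega) hx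
      · have hx2 := x.isLt
        have hb : ((⟨(x:ℕ) - n, by omega⟩ : Fin (2*n)) : ℕ) < n := by simp; omega
        have h2 := hP.2 x ⟨(x:ℕ) - n, by omega⟩ (by simp; omega) hb
        have h3 := hfix ⟨(x:ℕ) - n, by omega⟩ (by omega) hb
        apply Fin.ext
        rw [h2, h3]
        simp; omega
    rw [this]; exact Subgroup.one_mem _
  | succ k ih =>
    intro hk σ hP hfix
    exact inner hn (by omega) (fun τ hPτ hfixτ => ih (by omega) τ hPτ hfixτ)
      k σ hP (fun x hkx hxn => hfix x (by omega) hxn) (fun p hp => by omega)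

lemma mem_Wpar_of_Pp {n : ℕ} (hn : 2 ≤ n) {σ : Equiv.Perm (Fin (2*n))} (hP : Pp n σ) :
    σ ∈ Wpar n :=
  outer hn n le_rfl σ hP (fun x hx1 hx2 => by omega)

/-- members of Wpar preserve the first block -/
lemma Wpar_lt {n : ℕ} (hn : 2 ≤ n) {u : Equiv.Perm (Fin (2*n))} (hu : u ∈ Wpar n) :
    ∀ x : Fin (2*n), ((u x : ℕ) < n ↔ (x:ℕ) < n) := by
  refine Subgroup.closure_induction ?_ ?_ ?_ ?_ hu
  · rintro σ ⟨i, h1, h2, rfl⟩ x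
    rw [sGen_val hn h1 h2]
    have := x.isLt
    split_ifs <;> omega
  · intro x; simp
  · intro a b _ _ ha hb x
    simp only [Equiv.Perm.mul_apply]
    rw [ha, hb]
  · intro a _ ha x
    simpa using (ha (a⁻¹ x)).symm

/-- unfolding the mod condition of inW -/
lemma inW_apply {n : ℕ} (hn : 2 ≤ n) {σ : Equiv.Perm (Fin (2*n))} (hσ : inW n σ)
    {i : ℕ} (hi : i < n) (a b : Fin (2*n)) (ha : (a:ℕ) = n + i) (hb : (b:ℕ) = i) :
    ((σ a : Fin (2*n)) : ℕ) =
      if ((σ b : Fin (2*n)) : ℕ) < n then ((σ b : Fin (2*n)) : ℕ) + n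
      else ((σ b : Fin (2*n)) : ℕ) - n := by
  have h := hσ.1 ⟨i, hi⟩
  have ea : (⟨n + ((⟨i, hi⟩ : Fin n) : ℕ), by omega⟩ : Fin (2*n)) = a := Fin.ext (by simp [ha])
  have eb : (⟨((⟨i, hi⟩ : Fin n) : ℕ), by omega⟩ : Fin (2*n)) = b := Fin.ext (by simp [hb])
  rw [ea, eb] at h
  have hA := (σ a).isLt
  have hB := (σ b).isLt
  have h' : ((σ a : Fin (2*n)) : ℕ) % (2*n) = (n + ((σ b : Fin (2*n)) : ℕ)) % (2*n) := h
  rw [Nat.mod_eq_of_lt (by omega)] at h'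
  by_cases hc : ((σ b : Fin (2*n)) : ℕ) < n
  · rw [Nat.mod_eq_of_lt (by omega)] at h'
    rw [if_pos hc]; omega
  · rw [Nat.mod_eq_sub_mod (by omega), Nat.mod_eq_of_lt (by omega)] at h'
    rw [if_neg hc]; omega



lemma mem_Iset {n : ℕ} (σ : Equiv.Perm (Fin (2*n))) (b : Fin (2*n)) (i : Fin n)
    (h : (b:ℕ) = (i:ℕ)) :
    i ∈ Iset n σ ↔ n ≤ ((σ b : Fin (2*n)) : ℕ) := by
  have hb : b = ⟨(i:ℕ), by have := i.isLt; omega⟩ := Fin.ext h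
  rw [hb]
  simp only [Iset, Finset.mem_filter, Finset.mem_univ, true_and]

lemma Iset_mul_left {n : ℕ} (hn : 2 ≤ n) {a : Equiv.Perm (Fin (2*n))} (ha : a ∈ Wpar n)
    (w : Equiv.Perm (Fin (2*n))) : Iset n (a * w) = Iset n w := by
  ext i
  obtain ⟨b, hb⟩ : ∃ b : Fin (2*n), (b:ℕ) = (i:ℕ) := ⟨⟨(i:ℕ), by have := i.isLt; omega⟩, rfl⟩
  rw [mem_Iset _ b i hb, mem_Iset _ b i hb]
  simp only [Equiv.Perm.mul_apply]
  have := Wpar_lt hn ha (w b)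
  omega

lemma coset_eq {G : Type*} [Group G] (H : Subgroup G) (v w : G) (h : v * w⁻¹ ∈ H) :
    (fun u => u * v) '' (H : Set G) = (fun u => u * w) '' (H : Set G) := by
  ext x
  simp only [Set.mem_image, SetLike.mem_coe]
  constructor
  · rintro ⟨a, ha, rfl⟩
    exact ⟨a * (v * w⁻¹), H.mul_mem ha h, by group⟩
  · rintro ⟨a, ha, rfl⟩
    exact ⟨a * (v * w⁻¹)⁻¹, H.mul_mem ha (H.inv_mem h), by group⟩

lemma Pp_of_Iset_eq {n : ℕ} (hn : 2 ≤ n) {v w : Equiv.Perm (Fin (2*n))}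
    (hv : inW n v) (hw : inW n w) (hI : Iset n v = Iset n w) : Pp n (v * w⁻¹) := by
  have hIm : ∀ b : Fin (2*n), (b:ℕ) < n →
      (n ≤ ((v b : Fin (2*n)) : ℕ) ↔ n ≤ ((w b : Fin (2*n)) : ℕ)) := by
    intro b hbn
    have h1 := mem_Iset v b ⟨(b:ℕ), hbn⟩ rfl
    have h2 := mem_Iset w b ⟨(b:ℕ), hbn⟩ rfl
    rw [hI] at h1
    exact h1.symm.trans h2
  constructor
  · intro x
    simp only [Equiv.Perm.mul_apply]
    have hxv := congrArg Fin.val (show w (w⁻¹ x) = x from Equiv.apply_symm_apply w x)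
    by_cases hj : ((w⁻¹ x : Fin (2*n)) : ℕ) < n
    · have h1 := hIm (w⁻¹ x) hj
      omega
    · have hjlt := (w⁻¹ x).isLt
      obtain ⟨b, hb⟩ : ∃ b : Fin (2*n), (b:ℕ) = ((w⁻¹ x : Fin (2*n)) : ℕ) - n :=
        ⟨⟨_, by omega⟩, rfl⟩
      have hbn : (b:ℕ) < n := by omega
      have h2 := inW_apply hn hw (i := (b:ℕ)) hbn (w⁻¹ x) b (by omega) rfl
      have h3 := inW_apply hn hv (i := (b:ℕ)) hbn (w⁻¹ x) b (by omega) rfl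
      have h4 := hIm b hbn
      split_ifs at h2 h3 <;> omega
  · intro a b hab hbn
    simp only [Equiv.Perm.mul_apply]
    by_cases hj : ((w⁻¹ b : Fin (2*n)) : ℕ) < n
    · -- partner c with ↑c = n + ↑(w⁻¹ b)
      obtain ⟨c, hc⟩ : ∃ c : Fin (2*n), (c:ℕ) = n + ((w⁻¹ b : Fin (2*n)) : ℕ) :=
        ⟨⟨_, by omega⟩, rfl⟩
      have hwb := congrArg Fin.val (show w (w⁻¹ b) = b from Equiv.apply_symm_apply w b)
      have h2 := inW_apply hn hw (i := ((w⁻¹ b : Fin (2*n)) : ℕ)) hj c (w⁻¹ b) hc rfl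
      rw [if_pos (by omega)] at h2
      -- w c = a
      have hwc : w c = a := Fin.ext (by omega)
      have hca : w⁻¹ a = c := by rw [← hwc]; exact Equiv.symm_apply_apply w c
      rw [hca]
      have h3 := inW_apply hn hv (i := ((w⁻¹ b : Fin (2*n)) : ℕ)) hj c (w⁻¹ b) hc rfl
      have h4 := hIm (w⁻¹ b) hj
      split_ifs at h3 <;> omega
    · have hjlt := (w⁻¹ b).isLt
      obtain ⟨b0, hb0⟩ : ∃ b0 : Fin (2*n), (b0:ℕ) = ((w⁻¹ b : Fin (2*n)) : ℕ) - n :=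
        ⟨⟨_, by omega⟩, rfl⟩
      have hb0n : (b0:ℕ) < n := by omega
      have hwb := congrArg Fin.val (show w (w⁻¹ b) = b from Equiv.apply_symm_apply w b)
      have h2 := inW_apply hn hw (i := (b0:ℕ)) hb0n (w⁻¹ b) b0 (by omega) rfl
      have hwb0 : ((w b0 : Fin (2*n)) : ℕ) = (a:ℕ) := by
        split_ifs at h2 <;> omega
      have hb0a : w⁻¹ a = b0 := by
        rw [← Fin.ext hwb0]; exact Equiv.symm_apply_apply w b0
      rw [hb0a]
      have h3 := inW_apply hn hv (i := (b0:ℕ)) hb0n (w⁻¹ b) b0 (by omega) rfl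
      have h4 := hIm b0 hb0n
      split_ifs at h2 h3 <;> omega

-- ===== part 2 : construction =====

def flipPermF (n : ℕ) (S : Finset (Fin n)) (x : Fin (2*n)) : Fin (2*n) :=
  if h : (x:ℕ) ∈ S.image Fin.val then
    ⟨(x:ℕ) + n, by obtain ⟨i, _, hi⟩ := Finset.mem_image.mp h; have := i.isLt; omega⟩
  else if h2 : n ≤ (x:ℕ) ∧ (x:ℕ) - n ∈ S.image Fin.val then
    ⟨(x:ℕ) - n, by have := x.isLt; omega⟩
  else x

lemma image_lt {n : ℕ} {S : Finset (Fin n)} {m : ℕ} (h : m ∈ S.image Fin.val) : m < n := by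
  obtain ⟨i, _, rfl⟩ := Finset.mem_image.mp h
  exact i.isLt

lemma flipPermF_invol (n : ℕ) (S : Finset (Fin n)) : Function.Involutive (flipPermF n S) := by
  intro x
  unfold flipPermF
  by_cases h1 : (x:ℕ) ∈ S.image Fin.val
  · have hlt := image_lt h1
    rw [dif_pos h1]
    rw [dif_neg (by simp only [Fin.val_mk]; intro hc; exact absurd (image_lt hc) (by omega))]
    rw [dif_pos (by simp only [Fin.val_mk]; rw [Nat.add_sub_cancel]; exact ⟨by omega, h1⟩)]
    exact Fin.ext (by simp)
  · rw [dif_neg h1]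
    by_cases h2 : n ≤ (x:ℕ) ∧ (x:ℕ) - n ∈ S.image Fin.val
    · rw [dif_pos h2]
      rw [dif_pos (by simpa using h2.2)]
      exact Fin.ext (by simp; omega)
    · rw [dif_neg h2, dif_neg h1, dif_neg h2]

def flipPerm (n : ℕ) (S : Finset (Fin n)) : Equiv.Perm (Fin (2*n)) :=
  (flipPermF_invol n S).toPerm

lemma flipPerm_apply (n : ℕ) (S : Finset (Fin n)) (x : Fin (2*n)) :
    flipPerm n S x = flipPermF n S x := rfl

lemma mem_image_iff {n : ℕ} {S : Finset (Fin n)} {i : Fin n} :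
    (i:ℕ) ∈ S.image Fin.val ↔ i ∈ S := by
  constructor
  · intro h
    obtain ⟨j, hj, hval⟩ := Finset.mem_image.mp h
    rwa [← Fin.ext hval]
  · intro h
    exact Finset.mem_image_of_mem _ h

lemma flipPerm_val_fst {n : ℕ} (S : Finset (Fin n)) (i : Fin n) (b : Fin (2*n))
    (hb : (b:ℕ) = (i:ℕ)) :
    ((flipPerm n S b : Fin (2*n)) : ℕ) = if i ∈ S then (i:ℕ) + n else (i:ℕ) := by
  rw [flipPerm_apply]
  unfold flipPermF
  by_cases h : i ∈ S
  · rw [dif_pos (by rw [hb]; exact mem_image_iff.mpr h), if_pos h]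
    simp only [Fin.val_mk]; omega
  · rw [dif_neg (by rw [hb]; exact fun hc => h (mem_image_iff.mp hc)), if_neg h,
      dif_neg (fun hc => absurd hc.1 (by have := i.isLt; omega))]
    omega

lemma flipPerm_val_snd {n : ℕ} (S : Finset (Fin n)) (i : Fin n) (b : Fin (2*n))
    (hb : (b:ℕ) = n + (i:ℕ)) :
    ((flipPerm n S b : Fin (2*n)) : ℕ) = if i ∈ S then (i:ℕ) else n + (i:ℕ) := by
  rw [flipPerm_apply]
  unfold flipPermF
  have hnotfst : ¬ ((b:ℕ) ∈ S.image Fin.val) := by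
    intro hc; have := image_lt hc; omega
  rw [dif_neg hnotfst]
  by_cases h : i ∈ S
  · have hc2 : n ≤ (b:ℕ) ∧ (b:ℕ) - n ∈ S.image Fin.val := by
      constructor
      · omega
      · rw [hb, Nat.add_sub_cancel_left]; exact mem_image_iff.mpr h
    rw [dif_pos hc2, if_pos h]
    simp only [Fin.val_mk]; omega
  · have hc2 : ¬ (n ≤ (b:ℕ) ∧ (b:ℕ) - n ∈ S.image Fin.val) := by
      intro hc
      rw [hb, Nat.add_sub_cancel_left] at hc
      exact h (mem_image_iff.mp hc.2)
    rw [dif_neg hc2, if_neg h]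
    omega

lemma Iset_flipPerm {n : ℕ} (S : Finset (Fin n)) : Iset n (flipPerm n S) = S := by
  ext i
  obtain ⟨b, hb⟩ : ∃ b : Fin (2*n), (b:ℕ) = (i:ℕ) := ⟨⟨(i:ℕ), by have := i.isLt; omega⟩, rfl⟩
  rw [mem_Iset _ b i hb, flipPerm_val_fst S i b hb]
  have := i.isLt
  split_ifs with h
  · simp only [h, iff_true]; omega
  · simp only [h, iff_false]; omega

lemma inW_flipPerm {n : ℕ} (S : Finset (Fin n)) (hS : Even S.card) :
    inW n (flipPerm n S) := by
  constructor
  · intro i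
    have h1 := flipPerm_val_fst S i ⟨(i:ℕ), by have := i.isLt; omega⟩ rfl
    have h2 := flipPerm_val_snd S i ⟨n + (i:ℕ), by have := i.isLt; omega⟩ rfl
    rw [h1, h2]
    by_cases h : i ∈ S
    · rw [if_pos h, if_pos h]
      show (i:ℕ) % (2*n) = (n + ((i:ℕ) + n)) % (2*n)
      rw [show n + ((i:ℕ) + n) = (i:ℕ) + 1*(2*n) by ring, Nat.add_mul_mod_self_right]
    · rw [if_neg h, if_neg h]
  · have : (Finset.univ.filter (fun i : Fin n =>
        n ≤ ((flipPerm n S ⟨(i : ℕ), by have := i.isLt; omega⟩ : Fin (2 * n)) : ℕ))) =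
        Iset n (flipPerm n S) := rfl
    rw [this, Iset_flipPerm]
    exact hS

end CosetAux

/-- For `v, w ∈ W`, the right cosets `W_{[n-1]}·v` and `W_{[n-1]}·w`
coincide iff `I_v = I_w`; and every subset of `{1,…,n}` of even size is `I_w` for some
`w ∈ W`. Hence `w ↦ I_w` induces a bijection between `W_{[n-1]}\W` and even subsets. -/
theorem coset_bijection_Iset (n : ℕ) (hn : 2 ≤ n) :
    (∀ v w : Equiv.Perm (Fin (2 * n)), inW n v → inW n w →
      ((fun u => u * v) '' (Wpar n : Set (Equiv.Perm (Fin (2 * n)))) =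
        (fun u => u * w) '' (Wpar n : Set (Equiv.Perm (Fin (2 * n)))) ↔
          Iset n v = Iset n w)) ∧
    (∀ S : Finset (Fin n), Even S.card →
      ∃ w : Equiv.Perm (Fin (2 * n)), inW n w ∧ Iset n w = S) := by
  constructor
  · intro v w hv hw
    constructor
    · intro hset
      have hv1 : v ∈ (fun u => u * w) '' (Wpar n : Set (Equiv.Perm (Fin (2 * n)))) := by
        rw [← hset]
        exact ⟨1, (Wpar n).one_mem, by simp⟩
      obtain ⟨a, haW, hav⟩ := hv1
      have hav' : a * w = v := hav
      rw [← hav', CosetAux.Iset_mul_left hn haW w]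
    · intro hI
      exact CosetAux.coset_eq (Wpar n) v w
        (CosetAux.mem_Wpar_of_Pp hn (CosetAux.Pp_of_Iset_eq hn hv hw hI))
  · intro S hS
    exact ⟨CosetAux.flipPerm n S, CosetAux.inW_flipPerm S hS, CosetAux.Iset_flipPerm S⟩
end
end

section
/- Let A be the 4×4 real skew-symmetric matrix with above-diagonal entries a_{12} = 0, a_{13} = 0, a_{14} = 2, a_{23} = 1, a_{24} = 0, a_{34} = 2 (and a_{ji} = −a_{ij}). Then sgn(I,[4]) · Pf_I(A) ≥ 0 for every subset I ⊆ {1,2,3,4} of even size, yet A does not lie in the Euclidean closure of S_4^{>0} in the space of 4×4 real matrices. In particular, the Pfaffian sign pattern of totally positive skew-symmetric matrices does not characterize total nonnegativity. -/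
noncomputable section

open Matrix

set_option maxRecDepth 4000

-- ### auxiliary simp lemmas
@[simp] lemma vmk8 (k : ℕ) (h : k < 2 * 4) : ((⟨k, h⟩ : Fin (2 * 4)) : ℕ) = k := rfl
@[simp] lemma vmk4 (k : ℕ) (h : k < 4) : ((⟨k, h⟩ : Fin 4) : ℕ) = k := rfl

section cv
variable {α : Type*} (a0 a1 a2 a3 : α)
@[simp] lemma f4_0 : (⟨0, by omega⟩ : Fin 4) = 0 := rfl
@[simp] lemma f4_1 : (⟨1, by omega⟩ : Fin 4) = 1 := rfl
@[simp] lemma f4_2 : (⟨2, by omega⟩ : Fin 4) = 2 := rfl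
@[simp] lemma f4_3 : (⟨3, by omega⟩ : Fin 4) = 3 := rfl
@[simp] lemma cv4_0 : (![a0,a1,a2,a3]) 0 = a0 := rfl
@[simp] lemma cv4_1 : (![a0,a1,a2,a3]) 1 = a1 := rfl
@[simp] lemma cv4_2 : (![a0,a1,a2,a3]) 2 = a2 := rfl
@[simp] lemma cv4_3 : (![a0,a1,a2,a3]) 3 = a3 := rfl
end cv

lemma sum8 (f : Fin (2 * 4) → ℝ) : ∑ x, f x =
    f ⟨0, by omega⟩ + f ⟨1, by omega⟩ + f ⟨2, by omega⟩ + f ⟨3, by omega⟩ +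
    f ⟨4, by omega⟩ + f ⟨5, by omega⟩ + f ⟨6, by omega⟩ + f ⟨7, by omega⟩ :=
  Fin.sum_univ_eight f

-- the innermost factor in `of`-form
lemma xMat4of (s : ℝ) : xMat 4 4 s =
    Matrix.of (fun p q : Fin (2 * 4) =>
      (if (p : ℕ) = (q : ℕ) then 1 else 0)
      + ((if (p : ℕ) = 2 ∧ (q : ℕ) = 7 then s else 0)
      + (if (p : ℕ) = 3 ∧ (q : ℕ) = 6 then -s else 0))) := by
  ext p q
  fin_cases p <;> fin_cases q <;> norm_num [xMat]

lemma mulx (i : ℕ) (hi : i < 4) (s : ℝ) (M : Matrix (Fin (2 * 4)) (Fin (2 * 4)) ℝ) :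
    xMat 4 i s * M =
    Matrix.of fun p q => M p q
      + (if (p : ℕ) + 1 = i then s * M ⟨i, by omega⟩ q else 0)
      + (if (p : ℕ) = 4 + i then -(s * M ⟨3 + i, by omega⟩ q) else 0) := by
  ext p q
  rw [Matrix.mul_apply, sum8]
  simp only [xMat, Matrix.of_apply, if_pos hi]
  have hp := p.isLt
  interval_cases i <;> fin_cases p <;> norm_num <;> ring

lemma mulx4' (s : ℝ) (M : Matrix (Fin (2 * 4)) (Fin (2 * 4)) ℝ) :
    xMat 4 4 s * M =
    Matrix.of fun p q => M p q
      + (if (p : ℕ) = 2 then s * M ⟨7, by omega⟩ q else 0)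
      + (if (p : ℕ) = 3 then -(s * M ⟨6, by omega⟩ q) else 0) := by
  ext p q
  rw [Matrix.mul_apply, sum8]
  simp only [xMat, Matrix.of_apply]
  have hp := p.isLt
  fin_cases p <;> norm_num <;> ring

lemma prodX4 (t : ℕ → ℝ) : prodX 4 t =
    xMat 4 4 (t 0) * (xMat 4 2 (t 1) * (xMat 4 1 (t 2) *
      (xMat 4 3 (t 3) * (xMat 4 2 (t 4) * xMat 4 4 (t 5))))) := by
  have h1 : Npar 4 = 6 := rfl
  have h2 : wordD 4 = [4,2,1,3,2,4] := rfl
  simp [prodX, h1, h2, List.range_succ, mul_assoc]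

lemma X1eq (t : ℕ → ℝ) : X1 4 t =
    !![1, t 2, t 2 * t 4, 0;
       0, 1, t 4 + t 1, t 1 * t 3;
       0, 0, 1, t 3;
       0, 0, 0, 1] := by
  ext p q
  rw [X1, Matrix.of_apply, prodX4, mulx4', mulx 2 (by norm_num), mulx 1 (by norm_num),
    mulx 3 (by norm_num), mulx 2 (by norm_num), xMat4of]
  fin_cases p <;> fin_cases q <;>
    simp only [Matrix.of_apply, vmk8, vmk4, f4_0, f4_1, f4_2, f4_3,
      cv4_0, cv4_1, cv4_2, cv4_3] <;> norm_num

set_option maxHeartbeats 1600000 in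
lemma X2eq (t : ℕ → ℝ) : X2 4 t =
    !![0, 0, 0, t 2 * t 4 * t 5;
       0, 0, -(t 1 * t 3 * t 5), t 4 * t 5 + t 1 * t 5;
       0, t 0 * t 3 * t 4, -(t 3 * t 5) + -(t 0 * t 3), t 5 + t 0;
       -(t 0 * t 1 * t 2), t 0 * t 4 + t 0 * t 1, -(t 5) + -(t 0), 0] := by
  ext p q
  rw [X2, Matrix.of_apply, prodX4, mulx4', mulx 2 (by norm_num), mulx 1 (by norm_num),
    mulx 3 (by norm_num), mulx 2 (by norm_num), xMat4of]
  fin_cases p <;> fin_cases q <;>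
    simp only [Matrix.of_apply, vmk8, vmk4, f4_0, f4_1, f4_2, f4_3,
      cv4_0, cv4_1, cv4_2, cv4_3] <;> norm_num <;> ring

lemma AmatEq (t : ℕ → ℝ) : Amat 4 t =
    !![0, t 0 * t 1 * t 2 * t 3 * t 4, -(t 0 * t 1 * t 2 * t 3), t 0 * t 1 * t 2;
       -(t 0 * t 1 * t 2 * t 3 * t 4), 0, t 0 * t 1 * t 3, -(t 0 * t 4) + -(t 0 * t 1);
       t 0 * t 1 * t 2 * t 3, -(t 0 * t 1 * t 3), 0, t 5 + t 0;
       -(t 0 * t 1 * t 2), t 0 * t 4 + t 0 * t 1, -(t 5) + -(t 0), 0] := by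
  have hdet : (X1 4 t).det = 1 := by
    rw [X1eq]
    simp [Matrix.det_succ_row_zero, Fin.sum_univ_succ]
  have hmul : X1 4 t *
      !![0, t 0 * t 1 * t 2 * t 3 * t 4, -(t 0 * t 1 * t 2 * t 3), t 0 * t 1 * t 2;
         -(t 0 * t 1 * t 2 * t 3 * t 4), 0, t 0 * t 1 * t 3, -(t 0 * t 4) + -(t 0 * t 1);
         t 0 * t 1 * t 2 * t 3, -(t 0 * t 1 * t 3), 0, t 5 + t 0;
         -(t 0 * t 1 * t 2), t 0 * t 4 + t 0 * t 1, -(t 5) + -(t 0), 0] = X2 4 t := by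
    rw [X1eq, X2eq]
    ext p q
    fin_cases p <;> fin_cases q <;>
      simp only [Matrix.mul_apply, Fin.sum_univ_four, Matrix.of_apply, vmk4,
        f4_0, f4_1, f4_2, f4_3, cv4_0, cv4_1, cv4_2, cv4_3] <;> ring
  rw [Amat, ← hmul, ← mul_assoc, Matrix.nonsing_inv_mul _ (by rw [hdet]; exact isUnit_one),
    one_mul]


lemma pfaff0 (B : Matrix (Fin 0) (Fin 0) ℝ) : Pfaff B = 1 := by simp [Pfaff]

lemma sumPermTwo (f : Equiv.Perm (Fin 2) → ℝ) :
    ∑ σ, f σ = f 1 + f (Equiv.swap 0 1) := by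
  rw [Finset.univ_perm_fin_succ, Finset.sum_map, Fintype.sum_prod_type, Fin.sum_univ_two,
    Fintype.sum_subsingleton _ 1, Fintype.sum_subsingleton _ 1]
  simp only [Equiv.coe_toEmbedding, Equiv.Perm.decomposeFin_symm_of_one, Equiv.swap_self]
  rfl

lemma pfaff2 (B : Matrix (Fin 2) (Fin 2) ℝ) : Pfaff B = (B 0 1 - B 1 0) / 2 := by
  rw [Pfaff, sumPermTwo]
  have hp : ∀ g : Fin (2/2) → ℝ, ∏ i, g i = g ⟨0, by norm_num⟩ := fun g => Fin.prod_univ_one g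
  rw [hp, hp]
  norm_num [Equiv.swap_apply_def]
  ring

open Equiv Equiv.Perm in
lemma sumPermSucc {n : ℕ} (f : Equiv.Perm (Fin (n+1)) → ℝ) :
    ∑ σ, f σ = ∑ p : Fin (n+1), ∑ e : Equiv.Perm (Fin n), f (decomposeFin.symm (p, e)) := by
  rw [Finset.univ_perm_fin_succ, Finset.sum_map, Fintype.sum_prod_type]
  simp only [Equiv.coe_toEmbedding]

open Equiv Equiv.Perm in
lemma dApp2 (p : Fin 4) (e : Equiv.Perm (Fin 3)) :
    decomposeFin.symm (p, e) 2 = swap 0 p (e 1).succ := by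
  rw [show (2 : Fin 4) = (1 : Fin 3).succ from rfl, decomposeFin_symm_apply_succ]

open Equiv Equiv.Perm in
lemma dApp3 (p : Fin 4) (e : Equiv.Perm (Fin 3)) :
    decomposeFin.symm (p, e) 3 = swap 0 p (e 2).succ := by
  rw [show (3 : Fin 4) = (2 : Fin 3).succ from rfl, decomposeFin_symm_apply_succ]

open Equiv Equiv.Perm in
lemma dApp2' (p : Fin 3) (e : Equiv.Perm (Fin 2)) :
    decomposeFin.symm (p, e) 2 = swap 0 p (e 1).succ := by
  rw [show (2 : Fin 3) = (1 : Fin 2).succ from rfl, decomposeFin_symm_apply_succ]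

section fm
@[simp] lemma fm4_0 (h : 0 < 4) : (⟨0, h⟩ : Fin 4) = 0 := rfl
@[simp] lemma fm4_1 (h : 1 < 4) : (⟨1, h⟩ : Fin 4) = 1 := rfl
@[simp] lemma fm4_2 (h : 2 < 4) : (⟨2, h⟩ : Fin 4) = 2 := rfl
@[simp] lemma fm4_3 (h : 3 < 4) : (⟨3, h⟩ : Fin 4) = 3 := rfl
@[simp] lemma fs1_0 : ((0 : Fin 1).succ : Fin 2) = 1 := rfl
@[simp] lemma fs2_0 : ((0 : Fin 2).succ : Fin 3) = 1 := rfl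
@[simp] lemma fs2_1 : ((1 : Fin 2).succ : Fin 3) = 2 := rfl
@[simp] lemma fs3_0 : ((0 : Fin 3).succ : Fin 4) = 1 := rfl
@[simp] lemma fs3_1 : ((1 : Fin 3).succ : Fin 4) = 2 := rfl
@[simp] lemma fs3_2 : ((2 : Fin 3).succ : Fin 4) = 3 := rfl
end fm

open Equiv Equiv.Perm in
lemma pfaff4 (B : Matrix (Fin 4) (Fin 4) ℝ) :
    Pfaff B = (B 0 1 * B 2 3 - B 0 1 * B 3 2 - B 2 3 * B 1 0 + B 3 2 * B 1 0
             - B 0 2 * B 1 3 + B 0 2 * B 3 1 + B 1 3 * B 2 0 - B 3 1 * B 2 0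
             - B 0 3 * B 2 1 + B 0 3 * B 1 2 + B 2 1 * B 3 0 - B 1 2 * B 3 0) / 4 := by
  have hp2 : ∀ g : Fin (4/2) → ℝ, ∏ i, g i = g ⟨0, by norm_num⟩ * g ⟨1, by norm_num⟩ :=
    fun g => Fin.prod_univ_two g
  rw [Pfaff, sumPermSucc]
  simp only [hp2]
  norm_num [sumPermSucc, sumPermTwo, Fin.sum_univ_succ,
    decomposeFin.symm_sign, decomposeFin_symm_apply_zero, decomposeFin_symm_apply_one,
    dApp2, dApp3, dApp2', Equiv.Perm.sign_swap, Equiv.swap_apply_def]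
  simp +decide
  ring

lemma pfaff_congr {m m' : ℕ} (e : m = m') (B : Matrix (Fin m) (Fin m) ℝ)
    (B' : Matrix (Fin m') (Fin m') ℝ)
    (h : ∀ p q, B p q = B' (Fin.cast e p) (Fin.cast e q)) : Pfaff B = Pfaff B' := by
  subst e
  have : B = B' := by ext p q; simpa using h p q
  rw [this]

lemma pfI_empty {A : Matrix (Fin 4) (Fin 4) ℝ} : PfI A ∅ = 1 := pfaff0 _

lemma pfI_pair (A : Matrix (Fin 4) (Fin 4) ℝ) (i j : Fin 4) (hij : i < j) :
    PfI A {i, j} = (A i j - A j i) / 2 := by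
  have hcard : ({i, j} : Finset (Fin 4)).card = 2 := by
    rw [Finset.card_insert_of_notMem (by simp [hij.ne]), Finset.card_singleton]
  have hmem : ∀ r : Fin 2, (![i, j]) r ∈ ({i, j} : Finset (Fin 4)) := by
    intro r; fin_cases r <;> simp
  have hmono : StrictMono (![i, j] : Fin 2 → Fin 4) := by
    intro a b hab
    fin_cases a <;> fin_cases b <;> simp_all
  have hcast : StrictMono (fun p : Fin (({i, j} : Finset (Fin 4)).card) =>
      (![i, j] : Fin 2 → Fin 4) (Fin.cast hcard p)) := by
    intro a b hab
    exact hmono (show Fin.cast hcard a < Fin.cast hcard b from hab)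
  have hmem' : ∀ p : Fin (({i, j} : Finset (Fin 4)).card),
      (![i, j] : Fin 2 → Fin 4) (Fin.cast hcard p) ∈ ({i, j} : Finset (Fin 4)) :=
    fun p => hmem _
  have hemb := Finset.orderEmbOfFin_unique (s := ({i, j} : Finset (Fin 4))) rfl hmem' hcast
  rw [PfI, pfaff_congr hcard _
    (Matrix.of fun p q : Fin 2 => A ((![i, j]) p) ((![i, j]) q)) ?_, pfaff2]
  · simp
  · intro p q
    simp only [Matrix.of_apply, Finset.coe_orderIsoOfFin_apply]
    rw [← congrFun hemb p, ← congrFun hemb q]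

lemma pfI_univ (A : Matrix (Fin 4) (Fin 4) ℝ) :
    PfI A {0, 1, 2, 3} = Pfaff A := by
  have hcard : ({0, 1, 2, 3} : Finset (Fin 4)).card = 4 := by decide
  have hmem' : ∀ p : Fin (({0,1,2,3} : Finset (Fin 4)).card),
      (![0,1,2,3] : Fin 4 → Fin 4) (Fin.cast hcard p) ∈ ({0,1,2,3} : Finset (Fin 4)) := by
    intro p
    fin_cases p <;>
      simp only [Fin.cast_mk, fm4_0, fm4_1, fm4_2, fm4_3, Matrix.cons_val_zero,
        Matrix.cons_val_one, Matrix.cons_val_two, Matrix.cons_val_three, Matrix.head_cons,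
        Matrix.tail_cons, Finset.mem_insert, Finset.mem_singleton] <;> tauto
  have hcast : StrictMono (fun p : Fin (({0,1,2,3} : Finset (Fin 4)).card) =>
      (![0,1,2,3] : Fin 4 → Fin 4) (Fin.cast hcard p)) := by
    intro a b hab
    have h4 : StrictMono (![0,1,2,3] : Fin 4 → Fin 4) := by decide
    exact h4 (show Fin.cast hcard a < Fin.cast hcard b from hab)
  have hemb := Finset.orderEmbOfFin_unique (s := ({0,1,2,3} : Finset (Fin 4))) rfl hmem' hcast
  rw [PfI, pfaff_congr hcard _
    (Matrix.of fun p q : Fin 4 => A ((![0,1,2,3]) p) ((![0,1,2,3]) q)) ?_]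
  · congr 1
    ext p q
    fin_cases p <;> fin_cases q <;> simp
  · intro p q
    simp only [Matrix.of_apply, Finset.coe_orderIsoOfFin_apply]
    rw [← congrFun hemb p, ← congrFun hemb q]


/-- The given `4 × 4` skew-symmetric matrix satisfies the Pfaffian sign
pattern `sgn(I,[4])·Pf_I(A) ≥ 0` for all even `I` but is not totally nonnegative. -/
theorem pfaffian_signs_not_sufficient (A : Matrix (Fin 4) (Fin 4) ℝ)
    (hA : A = !![0, 0, 0, 2; 0, 0, 1, 0; 0, -1, 0, 2; -2, 0, -2, 0]) :
    (∀ I : Finset (Fin 4), Even I.card → 0 ≤ sgnSet I * PfI A I) ∧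
      A ∉ closure (Spos 4) := by
  constructor
  · -- Pfaffian sign pattern
    subst hA
    intro I hI
    have hcases : ∀ J : Finset (Fin 4), J = ∅ ∨ J = {0} ∨ J = {1} ∨ J = {2} ∨ J = {3} ∨
        J = {0,1} ∨ J = {0,2} ∨ J = {0,3} ∨ J = {1,2} ∨ J = {1,3} ∨ J = {2,3} ∨
        J = {0,1,2} ∨ J = {0,1,3} ∨ J = {0,2,3} ∨ J = {1,2,3} ∨ J = {0,1,2,3} := by decide
    rcases hcases I with rfl|rfl|rfl|rfl|rfl|rfl|rfl|rfl|rfl|rfl|rfl|rfl|rfl|rfl|rfl|rfl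
    · rw [pfI_empty]; norm_num [sgnSet, Finset.sum_insert, Finset.mem_singleton, Finset.mem_insert,
        Finset.sum_singleton, Matrix.cons_val_three, Matrix.cons_val_two, Matrix.cons_val_one,
          Matrix.head_cons, Matrix.tail_cons]
    · exact absurd hI (by decide)
    · exact absurd hI (by decide)
    · exact absurd hI (by decide)
    · exact absurd hI (by decide)
    · rw [pfI_pair _ 0 1 (by decide)]; norm_num [sgnSet, Finset.sum_insert, Finset.mem_singleton, Finset.mem_insert,
        Finset.sum_singleton, Matrix.cons_val_three, Matrix.cons_val_two, Matrix.cons_val_one,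
          Matrix.head_cons, Matrix.tail_cons]
    · rw [pfI_pair _ 0 2 (by decide)]; norm_num [sgnSet, Finset.sum_insert, Finset.mem_singleton, Finset.mem_insert,
        Finset.sum_singleton, Matrix.cons_val_three, Matrix.cons_val_two, Matrix.cons_val_one,
          Matrix.head_cons, Matrix.tail_cons]
    · rw [pfI_pair _ 0 3 (by decide)]
      norm_num [sgnSet, Finset.sum_insert, Finset.mem_singleton, Finset.mem_insert,
        Finset.sum_singleton, Matrix.cons_val_three, Matrix.cons_val_two, Matrix.cons_val_one,
          Matrix.head_cons, Matrix.tail_cons]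
      exact Even.pow_nonneg (by decide) _
    · rw [pfI_pair _ 1 2 (by decide)]
      norm_num [sgnSet, Finset.sum_insert, Finset.mem_singleton, Finset.mem_insert,
        Finset.sum_singleton, Matrix.cons_val_three, Matrix.cons_val_two, Matrix.cons_val_one,
          Matrix.head_cons, Matrix.tail_cons]
      exact Even.pow_nonneg (by decide) _
    · rw [pfI_pair _ 1 3 (by decide)]; norm_num [sgnSet, Finset.sum_insert, Finset.mem_singleton, Finset.mem_insert,
        Finset.sum_singleton, Matrix.cons_val_three, Matrix.cons_val_two, Matrix.cons_val_one,
          Matrix.head_cons, Matrix.tail_cons]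
    · rw [pfI_pair _ 2 3 (by decide)]
      norm_num [sgnSet, Finset.sum_insert, Finset.mem_singleton, Finset.mem_insert,
        Finset.sum_singleton, Matrix.cons_val_three, Matrix.cons_val_two, Matrix.cons_val_one,
          Matrix.head_cons, Matrix.tail_cons]
      exact Even.pow_nonneg (by decide) _
    · exact absurd hI (by decide)
    · exact absurd hI (by decide)
    · exact absurd hI (by decide)
    · exact absurd hI (by decide)
    · rw [pfI_univ, pfaff4]
      norm_num [sgnSet, Finset.sum_insert, Finset.mem_singleton, Finset.mem_insert,
        Finset.sum_singleton, Matrix.cons_val_three, Matrix.cons_val_two, Matrix.cons_val_one,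
          Matrix.head_cons, Matrix.tail_cons]
      exact Even.pow_nonneg (by decide) _
  · -- not totally nonnegative
    intro hmem
    set F : Matrix (Fin 4) (Fin 4) ℝ → ℝ :=
      fun B => B 0 2 * B 1 3 - B 0 3 * B 1 2 with hF
    have hcont : Continuous F := by
      apply Continuous.sub
      · exact (continuous_id.matrix_elem 0 2).mul (continuous_id.matrix_elem 1 3)
      · exact (continuous_id.matrix_elem 0 3).mul (continuous_id.matrix_elem 1 2)
    have hsub : Spos 4 ⊆ {B | 0 ≤ F B} := by
      rintro B ⟨t, ht, rfl⟩
      have h0 := ht 0 (by norm_num [Npar])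
      have h1 := ht 1 (by norm_num [Npar])
      have h2 := ht 2 (by norm_num [Npar])
      have h3 := ht 3 (by norm_num [Npar])
      have h4 := ht 4 (by norm_num [Npar])
      rw [Set.mem_setOf_eq, hF, AmatEq]
      simp only [Matrix.of_apply, cv4_0, cv4_1, cv4_2, cv4_3]
      have hpos : (0:ℝ) ≤ t 0 ^ 2 * t 1 * t 2 * t 3 * t 4 := by positivity
      nlinarith [hpos]
    have hclosed : IsClosed {B : Matrix (Fin 4) (Fin 4) ℝ | 0 ≤ F B} :=
      isClosed_le continuous_const hcont
    have h := closure_minimal hsub hclosed hmem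
    rw [Set.mem_setOf_eq, hF, hA] at h
    norm_num at h
end
end
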